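/- Let H be an infinite-dimensional Hilbert space with an orthonormal basis (e_i)_{i∈ℕ}, and let X ⊂ H be the ℤ-lattice generated by the basis, i.e. the set of all finite integer linear combinations of the e_i, with the metric induced by the norm of H. Then d∞(X) = ∞. -/

import Mathlib

open Metric Filter Set
open scoped ENNReal

/-- Least number of open balls of radius `r` (arbitrary centres) needed to cover `Ω`;
`⊤` if no finite cover exists. -/
noncomputable def coverNum {X : Type*} [MetricSpace X] (r : ℝ) (Ω : Set X) : ℕ∞ :=
  sInf ((fun s : Finset X => (s.card : ℕ∞)) '' {s | Ω ⊆ ⋃ y ∈ s, Metric.ball y r})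

/-- Largest number of pairwise disjoint open balls of radius `r` with centres in `Ω`. -/
noncomputable def packNum {X : Type*} [MetricSpace X] (r : ℝ) (Ω : Set X) : ℕ∞ :=
  sSup ((fun s : Finset X => (s.card : ℕ∞)) ''
    {s | ↑s ⊆ Ω ∧ (s : Set X).Pairwise fun a b => Disjoint (Metric.ball a r) (Metric.ball b r)})

/-- Logarithm of an extended natural number, valued in `[0,∞]`. -/
noncomputable def elog (n : ℕ∞) : ℝ≥0∞ :=
  if n = ⊤ then ⊤ else ENNReal.ofReal (Real.log n.toNat)

/-- The quantity `log n_r(B(x,R)) / log R`. -/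
noncomputable def dimRatio {X : Type*} [MetricSpace X] (x : X) (r R : ℝ) : ℝ≥0∞ :=
  elog (coverNum r (Metric.ball x R)) / ENNReal.ofReal (Real.log R)

/-- The asymptotic dimension computed at the base point `x`:
`lim_{r→∞} limsup_{R→∞} log n_r(B(x,R)) / log R`; since the inner expression is
nonincreasing in `r`, the limit equals the infimum over `r > 0`. -/
noncomputable def asympDimAt {X : Type*} [MetricSpace X] (x : X) : ℝ≥0∞ :=
  ⨅ (r : ℝ) (_ : 0 < r), Filter.limsup (fun R => dimRatio x r R) Filter.atTop

/-- The asymptotic dimension `d∞(X)` of a nonempty metric space. -/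
noncomputable def asympDim (X : Type*) [MetricSpace X] [Nonempty X] : ℝ≥0∞ :=
  asympDimAt (Classical.arbitrary X)

theorem inner_sum_sum' {H : Type*} [NormedAddCommGroup H] [InnerProductSpace ℝ H]
    (b : ℕ → H) (hb' : Orthonormal ℝ b) (A B : Finset ℕ) :
    (inner ℝ (∑ i ∈ A, b i) (∑ j ∈ B, b j) : ℝ) = (A ∩ B).card := by
  have hb := orthonormal_iff_ite.mp hb'
  rw [sum_inner]
  have h1 : ∀ i, (inner ℝ (b i) (∑ j ∈ B, b j) : ℝ) = if i ∈ B then 1 else 0 := by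
    intro i
    rw [inner_sum]
    simp only [hb]
    simp
  simp only [h1]
  rw [Finset.sum_ite_mem, Finset.sum_const, nsmul_eq_mul, mul_one]


/-- The `ℤ`-lattice generated by an orthonormal basis of an infinite-dimensional
Hilbert space, i.e. the set of finite integer linear combinations of the basis
vectors, has asymptotic dimension `∞`. -/
theorem asympDim_lattice_eq_top
    {H : Type*} [NormedAddCommGroup H] [InnerProductSpace ℝ H] [CompleteSpace H]
    (b : HilbertBasis ℕ ℝ H) :
    @asympDim
      ↥{x : H | ∃ (s : Finset ℕ) (c : ℕ → ℤ), x = ∑ i ∈ s, (c i : ℝ) • b i} _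
      ⟨⟨0, ⟨∅, fun _ => 0, by simp⟩⟩⟩ = ⊤ := by
  classical
  set Xset := {x : H | ∃ (s : Finset ℕ) (c : ℕ → ℤ), x = ∑ i ∈ s, (c i : ℝ) • b i} with hXset
  rw [asympDim, asympDimAt]
  set x : ↥Xset := @Classical.arbitrary _ ⟨⟨0, ⟨∅, fun _ => 0, by simp⟩⟩⟩ with hx
  simp only [iInf_eq_top]
  intro r hr
  -- choose k with (2*r)^2 < 2*k
  obtain ⟨k, hk⟩ : ∃ k : ℕ, (2*r)^2 < 2*(k:ℝ) := by
    obtain ⟨k, hk⟩ := exists_nat_gt ((2*r)^2)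
    exact ⟨k, by nlinarith⟩
  set Q : ℕ → H := fun j => ∑ i ∈ Finset.Ico (j*k) (j*k+k), b i with hQ
  have hQmem : ∀ j, Q j ∈ Xset := by
    intro j
    exact ⟨Finset.Ico (j*k) (j*k+k), fun _ => 1, by simp [hQ]⟩
  set QX : ℕ → ↥Xset := fun j => ⟨Q j, hQmem j⟩ with hQX
  have hnormsq : ∀ j, ‖Q j‖^2 = k := by
    intro j
    rw [← real_inner_self_eq_norm_sq, hQ, inner_sum_sum' b b.orthonormal,
      Finset.inter_self, Nat.card_Ico]
    simp
  have hnorm : ∀ j, ‖Q j‖ = Real.sqrt k := by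
    intro j
    rw [← hnormsq j, Real.sqrt_sq (norm_nonneg _)]
  have hdist : ∀ j j', j ≠ j' → 2*r < dist (QX j) (QX j') := by
    intro j j' hne
    have hdisj : Finset.Ico (j*k) (j*k+k) ∩ Finset.Ico (j'*k) (j'*k+k) = ∅ := by
      rw [Finset.Ico_inter_Ico]
      apply Finset.Ico_eq_empty
      simp only [not_lt]
      rcases hne.lt_or_gt with h | h
      · have h1 : j*k+k ≤ j'*k := by
          calc j*k+k = (j+1)*k := by ring
            _ ≤ j'*k := Nat.mul_le_mul_right k h
        exact le_trans (le_trans (min_le_left _ _) h1) (le_max_right _ _)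
      · have h1 : j'*k+k ≤ j*k := by
          calc j'*k+k = (j'+1)*k := by ring
            _ ≤ j*k := Nat.mul_le_mul_right k h
        exact le_trans (le_trans (min_le_right _ _) h1) (le_max_left _ _)
    have hinner : (inner ℝ (Q j) (Q j') : ℝ) = 0 := by
      rw [hQ, inner_sum_sum' b b.orthonormal, hdisj]
      simp
    have hsq : ‖Q j - Q j'‖^2 = 2*k := by
      rw [@norm_sub_sq_real, hinner, hnormsq, hnormsq]
      ring
    have h2r : 2*r < ‖Q j - Q j'‖ := by
      have : (2*r)^2 < ‖Q j - Q j'‖^2 := by rw [hsq]; exact hk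
      exact lt_of_pow_lt_pow_left₀ 2 (norm_nonneg _) this
    rwa [Subtype.dist_eq, dist_eq_norm]
  -- key: coverNum is ⊤ for large R
  have key : ∀ R : ℝ, ‖(x : H)‖ + Real.sqrt k < R → coverNum r (Metric.ball x R) = ⊤ := by
    intro R hR
    have hmem : ∀ j, QX j ∈ Metric.ball x R := by
      intro j
      rw [mem_ball, Subtype.dist_eq, dist_eq_norm]
      calc ‖Q j - (x:H)‖ ≤ ‖Q j‖ + ‖(x:H)‖ := norm_sub_le _ _
        _ = ‖(x:H)‖ + Real.sqrt k := by rw [hnorm]; ring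
        _ < R := hR
    rw [coverNum]
    suffices hE : (fun s : Finset ↥Xset => (s.card : ℕ∞)) ''
        {s | Metric.ball x R ⊆ ⋃ y ∈ s, Metric.ball y r} = ∅ by
      rw [hE]; exact sInf_empty
    rw [Set.image_eq_empty, Set.eq_empty_iff_forall_notMem]
    intro s hs
    have hc : ∀ j : ℕ, ∃ y : ↥Xset, y ∈ s ∧ QX j ∈ Metric.ball y r := by
      intro j
      have := hs (hmem j)
      simpa using this
    choose c hcs hcb using hc
    have : ∃ j j' : ℕ, j ≠ j' ∧ (⟨c j, hcs j⟩ : {y // y ∈ s}) = ⟨c j', hcs j'⟩ :=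
      Finite.exists_ne_map_eq_of_infinite _
    obtain ⟨j, j', hne, heq⟩ := this
    have hceq : c j = c j' := by simpa using heq
    have : dist (QX j) (QX j') < 2*r := by
      calc dist (QX j) (QX j') ≤ dist (QX j) (c j) + dist (c j) (QX j') := dist_triangle _ _ _
        _ < r + r := by
            apply add_lt_add (hcb j)
            rw [dist_comm, hceq]
            exact hcb j'
        _ = 2*r := by ring
    exact absurd this (not_lt.mpr (le_of_lt (hdist j j' hne)))
  have hev : ∀ᶠ R in atTop, dimRatio x r R = ⊤ := by
    filter_upwards [eventually_gt_atTop (‖(x:H)‖ + Real.sqrt k)] with R hR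
    rw [dimRatio, key R hR, elog]
    simp only [if_pos rfl]
    exact ENNReal.top_div_of_ne_top ENNReal.ofReal_ne_top
  calc Filter.limsup (fun R => dimRatio x r R) Filter.atTop
      = Filter.limsup (fun _ => (⊤ : ℝ≥0∞)) Filter.atTop := limsup_congr hev
    _ = ⊤ := limsup_const ⊤
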